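/- Let α and β be complex numbers such that αⁿ + βⁿ is an integer for every natural number n ≥ 1. Then α + β and αβ are both integers; that is, α and β are the roots of a monic quadratic polynomial with integer coefficients. -/

import Mathlib

theorem stmt_3 (α β : ℂ) (h : ∀ n : ℕ, 1 ≤ n → ∃ z : ℤ, α ^ n + β ^ n = z) :
    (∃ a : ℤ, α + β = a) ∧ (∃ b : ℤ, α * β = b) := by
  obtain ⟨z1, h1⟩ := h 1 (by norm_num)
  obtain ⟨z2, h2⟩ := h 2 (by norm_num)
  obtain ⟨z4, h4⟩ := h 4 (by norm_num)
  simp only [pow_one] at h1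
  have hm : (2 : ℂ) * (α * β) = ((z1 ^ 2 - z2 : ℤ) : ℂ) := by
    push_cast
    rw [← h1, ← h2]; ring
  have hk : (2 : ℂ) * (α * β) ^ 2 = ((z2 ^ 2 - z4 : ℤ) : ℂ) := by
    push_cast
    rw [← h2, ← h4]; ring
  set m : ℤ := z1 ^ 2 - z2 with hmdef
  set k : ℤ := z2 ^ 2 - z4 with hkdef
  have hq : (α * β) = (m : ℂ) / 2 := by
    field_simp
    linear_combination hm
  have hm2 : (m : ℂ) ^ 2 = ((2 * k : ℤ) : ℂ) := by
    push_cast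
    rw [hq] at hk
    field_simp at hk
    linear_combination hk
  have hmz : m ^ 2 = 2 * k := by
    exact_mod_cast hm2
  have heven : (2 : ℤ) ∣ m := by
    have : (2 : ℤ) ∣ m ^ 2 := ⟨k, hmz⟩
    exact Int.Prime.dvd_pow' Nat.prime_two this
  obtain ⟨t, ht⟩ := heven
  refine ⟨⟨z1, h1⟩, ⟨t, ?_⟩⟩
  rw [hq, ht]
  push_cast
  ring
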